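/- Let 1 ≤ q < ∞. Let X be a real Banach space with an unconditional basis (e_n)_{n∈ℕ} satisfying a lower q-estimate and Y a real Banach space with an unconditional basis (y_n)_{n∈ℕ} satisfying an upper q-estimate. Let (u_n)_{n∈ℕ} be disjointly finitely supported with respect to (e_n) and (v_n)_{n∈ℕ} be disjointly finitely supported with respect to (y_n), and suppose the sequence (u_n, v_n)_{n∈ℕ} in X × Y (with the sup norm) is semi-normalized. Then there is a strictly increasing sequence (n_k)_{k∈ℕ} such that the sequence ((u_{n_k}, v_{n_k}))_{k∈ℕ} is equivalent either to some sequence in X disjointly finitely supported with respect to (e_n), or to some sequence in Y disjointly finitely supported with respect to (y_n). -/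

import Mathlib

open scoped BigOperators

/-- `e` is a Schauder basis of `X`: every vector has a unique expansion as a norm-convergent
series `∑ n, a n • e n` (partial sums over `Finset.range N`). -/
def IsSchauderBasis {X : Type*} [NormedAddCommGroup X] [NormedSpace ℝ X] (e : ℕ → X) : Prop :=
  ∀ x : X, ∃! a : ℕ → ℝ,
    Filter.Tendsto (fun N => ∑ n ∈ Finset.range N, a n • e n) Filter.atTop (nhds x)

/-- `u` is a block basic sequence with respect to `e`. -/
def IsBlockBasic {X : Type*} [NormedAddCommGroup X] [NormedSpace ℝ X]
    (e : ℕ → X) (u : ℕ → X) : Prop :=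
  ∃ (A : ℕ → Finset ℕ) (a : ℕ → ℝ),
    (∀ j, (A j).Nonempty) ∧
    (∀ j, ∀ m ∈ A j, ∀ k ∈ A (j + 1), m < k) ∧
    (∀ j, u j = ∑ n ∈ A j, a n • e n)

/-- A sequence is semi-normalized if its norms are bounded away from zero and from infinity. -/
def SemiNormalized {X : Type*} [NormedAddCommGroup X] (u : ℕ → X) : Prop :=
  ∃ c C : ℝ, 0 < c ∧ ∀ j, c ≤ ‖u j‖ ∧ ‖u j‖ ≤ C

/-- Two sequences (possibly in different spaces) are equivalent. -/
def SeqEquiv {X Y : Type*} [NormedAddCommGroup X] [NormedSpace ℝ X]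
    [NormedAddCommGroup Y] [NormedSpace ℝ Y] (u : ℕ → X) (w : ℕ → Y) : Prop :=
  ∃ C : ℝ, 1 ≤ C ∧ ∀ (a : ℕ → ℝ) (s : Finset ℕ),
    C⁻¹ * ‖∑ j ∈ s, a j • w j‖ ≤ ‖∑ j ∈ s, a j • u j‖ ∧
    ‖∑ j ∈ s, a j • u j‖ ≤ C * ‖∑ j ∈ s, a j • w j‖

/-- A bounded linear operator is compact if the image of the closed unit ball is
relatively compact. -/
def CompactOp {X Y : Type*} [NormedAddCommGroup X] [NormedSpace ℝ X]
    [NormedAddCommGroup Y] [NormedSpace ℝ Y] (T : Y →L[ℝ] X) : Prop :=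
  IsCompact (closure (T '' Metric.closedBall 0 1))

/-- `e` is an unconditional basis of `X`. -/
def IsUncondBasis {X : Type*} [NormedAddCommGroup X] [NormedSpace ℝ X] (e : ℕ → X) : Prop :=
  (∀ n, e n ≠ 0) ∧ ∀ x : X, ∃! a : ℕ → ℝ, HasSum (fun n => a n • e n) x

/-- `u` is disjointly finitely supported with respect to `e`. -/
def DisjSupported {X : Type*} [NormedAddCommGroup X] [NormedSpace ℝ X]
    (e : ℕ → X) (u : ℕ → X) : Prop :=
  ∃ A : ℕ → Finset ℕ, Pairwise (Function.onFun Disjoint A) ∧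
    ∀ j, u j ∈ Submodule.span ℝ (e '' (A j : Set ℕ))

/-- The basis `e` satisfies a lower `q`-estimate. -/
def LowerEstimate {X : Type*} [NormedAddCommGroup X] [NormedSpace ℝ X]
    (e : ℕ → X) (q : ℝ) : Prop :=
  ∃ C : ℝ, 0 < C ∧ ∀ (m : ℕ) (f : Fin m → X) (A : Fin m → Finset ℕ),
    Pairwise (Function.onFun Disjoint A) →
    (∀ i, f i ∈ Submodule.span ℝ (e '' (A i : Set ℕ))) →
    (∑ i, ‖f i‖ ^ q) ^ (1 / q) ≤ C * ‖∑ i, f i‖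

/-- The basis `e` satisfies an upper `q`-estimate. -/
def UpperEstimate {X : Type*} [NormedAddCommGroup X] [NormedSpace ℝ X]
    (e : ℕ → X) (q : ℝ) : Prop :=
  ∃ C : ℝ, 0 < C ∧ ∀ (m : ℕ) (f : Fin m → X) (A : Fin m → Finset ℕ),
    Pairwise (Function.onFun Disjoint A) →
    (∀ i, f i ∈ Submodule.span ℝ (e '' (A i : Set ℕ))) →
    ‖∑ i, f i‖ ≤ C * (∑ i, ‖f i‖ ^ q) ^ (1 / q)

/-- `u` is equivalent to the canonical basis of `ℓ_q`. -/
def EquivCanonLq {X : Type*} [NormedAddCommGroup X] [NormedSpace ℝ X]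
    (u : ℕ → X) (q : ℝ) : Prop :=
  ∃ C : ℝ, 1 ≤ C ∧ ∀ (a : ℕ → ℝ) (s : Finset ℕ),
    C⁻¹ * (∑ j ∈ s, |a j| ^ q) ^ (1 / q) ≤ ‖∑ j ∈ s, a j • u j‖ ∧
    ‖∑ j ∈ s, a j • u j‖ ≤ C * (∑ j ∈ s, |a j| ^ q) ^ (1 / q)

/-- `Z` contains an isomorphic copy of `ℓ_q`: there is a bounded linear map `J : ℓ_q → Z`
which is bounded below. -/
def ContainsLp (Z : Type*) [NormedAddCommGroup Z] [NormedSpace ℝ Z] (q : ℝ) : Prop :=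
  ∃ (J : lp (fun _ : ℕ => ℝ) (ENNReal.ofReal q) →ₗ[ℝ] Z) (C c : ℝ), 0 < c ∧
    ∀ f, ‖J f‖ ≤ C * ‖f‖ ∧ c * ‖f‖ ≤ ‖J f‖

/-- `T` is strictly singular: it is bounded below on no infinite-dimensional subspace. -/
def StrictlySingular {X Y : Type*} [NormedAddCommGroup X] [NormedSpace ℝ X]
    [NormedAddCommGroup Y] [NormedSpace ℝ Y] (T : Y →L[ℝ] X) : Prop :=
  ∀ (Z : Submodule ℝ Y) (c : ℝ), 0 < c → (∀ z ∈ Z, c * ‖z‖ ≤ ‖T z‖) →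
    FiniteDimensional ℝ Z

/-- A finite family of Banach spaces is splitting for unconditional bases. -/
def SplittingFamily {ι : Type*} [Fintype ι] (Z : ι → Type*)
    [∀ i, NormedAddCommGroup (Z i)] [∀ i, NormedSpace ℝ (Z i)] : Prop :=
  ∀ w : ℕ → (∀ i, Z i), IsUncondBasis w →
    ∃ N : ι → Set ℕ, Pairwise (Function.onFun Disjoint N) ∧ (⋃ i, N i) = Set.univ ∧
      ∀ i, Nonempty ((Submodule.span ℝ (w '' N i)).topologicalClosure ≃L[ℝ] Z i)

/-- A pair of Banach spaces is splitting for unconditional bases. -/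
def SplittingPair (U V : Type*) [NormedAddCommGroup U] [NormedSpace ℝ U]
    [NormedAddCommGroup V] [NormedSpace ℝ V] : Prop :=
  ∀ w : ℕ → U × V, IsUncondBasis w →
    ∃ N₁ N₂ : Set ℕ, Disjoint N₁ N₂ ∧ N₁ ∪ N₂ = Set.univ ∧
      Nonempty ((Submodule.span ℝ (w '' N₁)).topologicalClosure ≃L[ℝ] U) ∧
      Nonempty ((Submodule.span ℝ (w '' N₂)).topologicalClosure ≃L[ℝ] V)

/-- `U` has a unique, up to equivalence and permutation, unconditional basis. -/
def HasUTAPBasis (U : Type*) [NormedAddCommGroup U] [NormedSpace ℝ U] : Prop :=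
  ∃ e : ℕ → U, IsUncondBasis e ∧ SemiNormalized e ∧
    ∀ f : ℕ → U, IsUncondBasis f → SemiNormalized f →
      ∃ π : Equiv.Perm ℕ, SeqEquiv (fun n => f (π n)) e

/-- `y` is a subsymmetric basic sequence: semi-normalized, an unconditional basis of its
closed linear span, and equivalent to all of its subsequences. -/
def IsSubsymmetric {X : Type*} [NormedAddCommGroup X] [NormedSpace ℝ X] (y : ℕ → X) : Prop :=
  SemiNormalized y ∧ (∀ n, y n ≠ 0) ∧
  (∀ x : X, x ∈ (Submodule.span ℝ (Set.range y)).topologicalClosure →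
    ∃! a : ℕ → ℝ, HasSum (fun n => a n • y n) x) ∧
  ∀ k : ℕ → ℕ, StrictMono k → SeqEquiv (fun n => y (k n)) y


section Coeff
variable {Y : Type*} [NormedAddCommGroup Y] [NormedSpace ℝ Y]

lemma hasSum_partial_bound {f : ℕ → Y} {x : Y} (h : HasSum f x) :
    ∃ M : ℝ, ∀ F : Finset ℕ, ‖∑ n ∈ F, f n‖ ≤ M := by
  have h1 : ∀ᶠ G in Filter.atTop, ‖(∑ n ∈ G, f n) - x‖ ≤ 1 := by
    have := Metric.tendsto_nhds.1 h 1 one_pos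
    filter_upwards [this] with G hG
    rw [dist_eq_norm] at hG; exact hG.le
  obtain ⟨F₀, hF₀⟩ := Filter.eventually_atTop.1 h1
  refine ⟨‖x‖ + 1 + ∑ n ∈ F₀, ‖f n‖, fun F => ?_⟩
  have hsplit : ∑ n ∈ F ∪ F₀, f n = ∑ n ∈ F, f n + ∑ n ∈ F₀ \ F, f n := by
    rw [← Finset.sum_union Finset.disjoint_sdiff, Finset.union_sdiff_self_eq_union]
  have h2 : ‖∑ n ∈ F ∪ F₀, f n‖ ≤ ‖x‖ + 1 := by
    have := hF₀ (F ∪ F₀) Finset.subset_union_right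
    calc ‖∑ n ∈ F ∪ F₀, f n‖ = ‖((∑ n ∈ F ∪ F₀, f n) - x) + x‖ := by rw [sub_add_cancel]
      _ ≤ ‖(∑ n ∈ F ∪ F₀, f n) - x‖ + ‖x‖ := norm_add_le _ _
      _ ≤ ‖x‖ + 1 := by linarith
  have h3 : ‖∑ n ∈ F₀ \ F, f n‖ ≤ ∑ n ∈ F₀, ‖f n‖ :=
    (norm_sum_le _ _).trans (Finset.sum_le_sum_of_subset_of_nonneg (Finset.sdiff_subset)
      (fun _ _ _ => norm_nonneg _))
  have : ∑ n ∈ F, f n = ∑ n ∈ F ∪ F₀, f n - ∑ n ∈ F₀ \ F, f n := by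
    rw [hsplit]; abel
  rw [this]
  calc ‖_ - _‖ ≤ ‖∑ n ∈ F ∪ F₀, f n‖ + ‖∑ n ∈ F₀ \ F, f n‖ := norm_sub_le _ _
    _ ≤ ‖x‖ + 1 + ∑ n ∈ F₀, ‖f n‖ := add_le_add h2 h3

variable {y : ℕ → Y}

noncomputable def ucoeff (hy : IsUncondBasis y) (x : Y) : ℕ → ℝ := (hy.2 x).choose

lemma ucoeff_hasSum (hy : IsUncondBasis y) (x : Y) :
    HasSum (fun n => ucoeff hy x n • y n) x := (hy.2 x).choose_spec.1

lemma ucoeff_eq (hy : IsUncondBasis y) {x : Y} {a : ℕ → ℝ}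
    (h : HasSum (fun n => a n • y n) x) : a = ucoeff hy x := (hy.2 x).choose_spec.2 a h

lemma ucoeff_add (hy : IsUncondBasis y) (x z : Y) :
    ucoeff hy (x + z) = ucoeff hy x + ucoeff hy z := by
  refine (ucoeff_eq hy ?_).symm
  have := (ucoeff_hasSum hy x).add (ucoeff_hasSum hy z)
  simpa [add_smul] using this

lemma ucoeff_smul (hy : IsUncondBasis y) (r : ℝ) (x : Y) :
    ucoeff hy (r • x) = r • ucoeff hy x := by
  refine (ucoeff_eq hy ?_).symm
  have := (ucoeff_hasSum hy x).const_smul r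
  simpa [smul_smul] using this

lemma ucoeff_finsum (hy : IsUncondBasis y) (a : ℕ → ℝ) (G : Finset ℕ) :
    ucoeff hy (∑ n ∈ G, a n • y n) = fun n => if n ∈ G then a n else 0 := by
  refine (ucoeff_eq hy ?_).symm
  have hs : (∑ n ∈ G, a n • y n) = ∑ n ∈ G, (if n ∈ G then a n else 0) • y n :=
    Finset.sum_congr rfl (fun n hn => by simp [hn])
  rw [hs]
  exact hasSum_sum_of_ne_finset_zero (fun b hb => by simp [hb])

end Coeff

section Reno
variable {Y : Type*} [NormedAddCommGroup Y] [NormedSpace ℝ Y] {y : ℕ → Y}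

noncomputable def unorm (hy : IsUncondBasis y) (x : Y) : ℝ :=
  ⨆ F : Finset ℕ, ‖∑ n ∈ F, ucoeff hy x n • y n‖

lemma unorm_bdd (hy : IsUncondBasis y) (x : Y) :
    BddAbove (Set.range fun F : Finset ℕ => ‖∑ n ∈ F, ucoeff hy x n • y n‖) := by
  obtain ⟨M, hM⟩ := hasSum_partial_bound (ucoeff_hasSum hy x)
  exact ⟨M, by rintro r ⟨F, rfl⟩; exact hM F⟩

lemma le_unorm (hy : IsUncondBasis y) (x : Y) (F : Finset ℕ) :
    ‖∑ n ∈ F, ucoeff hy x n • y n‖ ≤ unorm hy x :=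
  le_ciSup (unorm_bdd hy x) F

lemma norm_le_unorm (hy : IsUncondBasis y) (x : Y) : ‖x‖ ≤ unorm hy x := by
  have h := (continuous_norm.tendsto x).comp (ucoeff_hasSum hy x)
  exact le_of_tendsto h (Filter.Eventually.of_forall (le_unorm hy x))

lemma unorm_nonneg (hy : IsUncondBasis y) (x : Y) : 0 ≤ unorm hy x := by
  have := le_unorm hy x ∅
  simpa using this.trans_eq' (by simp)

lemma unorm_zero (hy : IsUncondBasis y) : unorm hy 0 = 0 := by
  have hc : ucoeff hy (0 : Y) = 0 := by
    refine (ucoeff_eq hy ?_).symm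
    simpa using (hasSum_zero : HasSum (fun _ : ℕ => (0 : Y)) 0)
  unfold unorm
  rw [hc]
  simp [ciSup_const]

lemma unorm_add_le (hy : IsUncondBasis y) (x z : Y) :
    unorm hy (x + z) ≤ unorm hy x + unorm hy z := by
  refine ciSup_le fun F => ?_
  rw [ucoeff_add]
  calc ‖∑ n ∈ F, (ucoeff hy x n + ucoeff hy z n) • y n‖
      = ‖(∑ n ∈ F, ucoeff hy x n • y n) + ∑ n ∈ F, ucoeff hy z n • y n‖ := by
        rw [← Finset.sum_add_distrib]; congr 1; exact Finset.sum_congr rfl fun n _ => add_smul _ _ _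
    _ ≤ ‖∑ n ∈ F, ucoeff hy x n • y n‖ + ‖∑ n ∈ F, ucoeff hy z n • y n‖ := norm_add_le _ _
    _ ≤ unorm hy x + unorm hy z := add_le_add (le_unorm hy x F) (le_unorm hy z F)

lemma unorm_smul (hy : IsUncondBasis y) (r : ℝ) (x : Y) :
    unorm hy (r • x) = |r| * unorm hy x := by
  have key : ∀ F : Finset ℕ, ‖∑ n ∈ F, ucoeff hy (r • x) n • y n‖
      = |r| * ‖∑ n ∈ F, ucoeff hy x n • y n‖ := by
    intro F
    rw [ucoeff_smul]
    have : ∑ n ∈ F, (r • ucoeff hy x) n • y n = r • ∑ n ∈ F, ucoeff hy x n • y n := by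
      rw [Finset.smul_sum]; exact Finset.sum_congr rfl fun n _ => by simp [smul_smul]
    rw [this, norm_smul, Real.norm_eq_abs]
  unfold unorm
  simp_rw [key]
  exact (Real.mul_iSup_of_nonneg (abs_nonneg r) _).symm
end Reno

section RenoSpace
variable {Y : Type*} [NormedAddCommGroup Y] [NormedSpace ℝ Y]

@[nolint unusedArguments]
def Reno {Y : Type*} [NormedAddCommGroup Y] [NormedSpace ℝ Y]
    (y : ℕ → Y) (hy : IsUncondBasis y) : Type _ := Y

variable {y : ℕ → Y} (hy : IsUncondBasis y)

instance : AddCommGroup (Reno y hy) := inferInstanceAs (AddCommGroup Y)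
instance : Module ℝ (Reno y hy) := inferInstanceAs (Module ℝ Y)

def Reno.toY : Reno y hy → Y := fun x => x

lemma ucoeff_sub (x z : Y) :
    ucoeff hy (x - z) = ucoeff hy x - ucoeff hy z := by
  have h1 : ucoeff hy (-z) = -ucoeff hy z := by
    have := ucoeff_smul hy (-1) z
    simpa using this
  rw [sub_eq_add_neg, ucoeff_add, h1, sub_eq_add_neg]

noncomputable instance : NormedAddCommGroup (Reno y hy) :=
  AddGroupNorm.toNormedAddCommGroup
    { toFun := fun x => unorm hy (Reno.toY hy x)
      map_zero' := unorm_zero hy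
      add_le' := fun x z => unorm_add_le hy (Reno.toY hy x) (Reno.toY hy z)
      neg' := fun x => by
        show unorm hy (-(Reno.toY hy x)) = unorm hy (Reno.toY hy x)
        rw [← neg_one_smul ℝ (Reno.toY hy x), unorm_smul]; simp
      eq_zero_of_map_eq_zero' := fun x h => by
        have h1 := norm_le_unorm hy (Reno.toY hy x)
        have h2 : ‖Reno.toY hy x‖ ≤ 0 := h1.trans_eq h
        exact norm_le_zero_iff.1 h2 }

lemma Reno.norm_def (x : Reno y hy) : ‖x‖ = unorm hy (Reno.toY hy x) := rfl

noncomputable instance : NormedSpace ℝ (Reno y hy) :=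
  ⟨fun r x => by
    show unorm hy (r • Reno.toY hy x) ≤ ‖r‖ * unorm hy (Reno.toY hy x)
    rw [unorm_smul, Real.norm_eq_abs]⟩

lemma Reno.norm_Y_le (x : Reno y hy) : ‖Reno.toY hy x‖ ≤ ‖x‖ := norm_le_unorm hy _

instance [CompleteSpace Y] : CompleteSpace (Reno y hy) := by
  apply Metric.complete_of_cauchySeq_tendsto
  intro xs hxs
  set c : ℕ → ℕ → ℝ := fun k => ucoeff hy (Reno.toY hy (xs k)) with hc
  -- distance control
  have hdist : ∀ k l (F : Finset ℕ), ‖∑ n ∈ F, (c k n - c l n) • y n‖ ≤ dist (xs k) (xs l) := by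
    intro k l F
    have h1 : ucoeff hy (Reno.toY hy (xs k) - Reno.toY hy (xs l)) = fun n => c k n - c l n := by
      rw [ucoeff_sub]; rfl
    have h2 := le_unorm hy (Reno.toY hy (xs k) - Reno.toY hy (xs l)) F
    rw [h1] at h2
    rw [dist_eq_norm, Reno.norm_def]; exact h2
  -- convergence of underlying sequence in Y
  have hxsY : CauchySeq (fun k => Reno.toY hy (xs k)) := by
    rw [Metric.cauchySeq_iff] at hxs ⊢
    intro ε hε
    obtain ⟨N, hN⟩ := hxs ε hε
    refine ⟨N, fun k hk l hl => ?_⟩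
    have := hN k hk l hl
    have h2 : dist (Reno.toY hy (xs k)) (Reno.toY hy (xs l)) ≤ dist (xs k) (xs l) := by
      simp only [dist_eq_norm]
      exact Reno.norm_Y_le hy (xs k - xs l)
    linarith
  obtain ⟨x, hx⟩ := cauchySeq_tendsto_of_complete hxsY
  -- coordinatewise convergence
  have hcoord : ∀ n, ∃ L : ℝ, Filter.Tendsto (fun k => c k n) Filter.atTop (nhds L) := by
    intro n
    apply cauchySeq_tendsto_of_complete
    rw [Metric.cauchySeq_iff]
    intro ε hε
    have hyn : 0 < ‖y n‖ := norm_pos_iff.2 (hy.1 n)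
    rw [Metric.cauchySeq_iff] at hxs
    obtain ⟨N, hN⟩ := hxs (ε * ‖y n‖) (by positivity)
    refine ⟨N, fun k hk l hl => ?_⟩
    have h1 := hdist k l {n}
    simp only [Finset.sum_singleton, norm_smul, Real.norm_eq_abs] at h1
    have h2 := hN k hk l hl
    rw [Real.dist_eq]
    exact (mul_lt_mul_iff_of_pos_right hyn).1 (h1.trans_lt h2)
  choose d hd using hcoord
  -- the key uniform estimate
  have key : ∀ ε : ℝ, 0 < ε → ∃ N, ∀ k ≥ N, ∀ F : Finset ℕ,
      ‖∑ n ∈ F, (c k n - d n) • y n‖ ≤ ε := by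
    intro ε hε
    rw [Metric.cauchySeq_iff] at hxs
    obtain ⟨N, hN⟩ := hxs (ε / 2) (by positivity)
    refine ⟨N, fun k hk F => ?_⟩
    have hlim : Filter.Tendsto (fun l => ‖∑ n ∈ F, (c k n - c l n) • y n‖)
        Filter.atTop (nhds ‖∑ n ∈ F, (c k n - d n) • y n‖) := by
      apply Filter.Tendsto.norm
      apply tendsto_finset_sum
      intro n _
      exact (((tendsto_const_nhds).sub (hd n)).smul tendsto_const_nhds)
    have hev : ∀ᶠ l in Filter.atTop, ‖∑ n ∈ F, (c k n - c l n) • y n‖ ≤ ε / 2 := by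
      filter_upwards [Filter.eventually_ge_atTop N] with l hl
      exact (hdist k l F).trans (hN k hk l hl).le
    have := le_of_tendsto hlim hev
    linarith
  -- d gives a HasSum representation of x
  have hxsum : HasSum (fun n => d n • y n) x := by
    rw [HasSum, Metric.tendsto_nhds]
    intro ε hε
    obtain ⟨N₁, hN₁⟩ := key (ε / 3) (by positivity)
    have hx' := Metric.tendsto_atTop.1 hx (ε / 3) (by positivity)
    obtain ⟨N₂, hN₂⟩ := hx'
    set k := max N₁ N₂
    have hsum_k : HasSum (fun n => c k n • y n) (Reno.toY hy (xs k)) := ucoeff_hasSum hy _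
    rw [HasSum, Metric.tendsto_nhds] at hsum_k
    have := Filter.eventually_atTop.1 (hsum_k (ε / 3) (by positivity))
    obtain ⟨F₀, hF₀⟩ := this
    apply Filter.eventually_atTop.2
    refine ⟨F₀, fun G hG => ?_⟩
    have h1 : ‖∑ n ∈ G, (c k n - d n) • y n‖ ≤ ε / 3 := hN₁ k (le_max_left _ _) G
    have h2 : dist (∑ n ∈ G, c k n • y n) (Reno.toY hy (xs k)) < ε / 3 := hF₀ G hG
    have h3 : dist (Reno.toY hy (xs k)) x < ε / 3 := hN₂ k (le_max_right _ _)
    have hsplit : ∑ n ∈ G, d n • y n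
        = ∑ n ∈ G, c k n • y n - ∑ n ∈ G, (c k n - d n) • y n := by
      rw [← Finset.sum_sub_distrib]
      exact Finset.sum_congr rfl fun n _ => by rw [← sub_smul]; ring_nf
    rw [dist_eq_norm, hsplit]
    have : ∑ n ∈ G, c k n • y n - ∑ n ∈ G, (c k n - d n) • y n - x
        = (∑ n ∈ G, c k n • y n - Reno.toY hy (xs k)) + (Reno.toY hy (xs k) - x)
          - ∑ n ∈ G, (c k n - d n) • y n := by abel
    rw [this]
    calc ‖_‖ ≤ ‖(∑ n ∈ G, c k n • y n - Reno.toY hy (xs k)) + (Reno.toY hy (xs k) - x)‖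
        + ‖∑ n ∈ G, (c k n - d n) • y n‖ := norm_sub_le _ _
      _ ≤ ‖∑ n ∈ G, c k n • y n - Reno.toY hy (xs k)‖ + ‖Reno.toY hy (xs k) - x‖
        + ‖∑ n ∈ G, (c k n - d n) • y n‖ := by
          have := norm_add_le (∑ n ∈ G, c k n • y n - Reno.toY hy (xs k)) (Reno.toY hy (xs k) - x)
          linarith
      _ < ε := by
          rw [dist_eq_norm] at h2 h3
          linarith
  have hdx : ucoeff hy x = d := (ucoeff_eq hy hxsum).symm
  -- convergence in the Reno norm
  refine ⟨x, ?_⟩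
  refine Metric.tendsto_atTop.2 ?_
  intro ε hε
  obtain ⟨N, hN⟩ := key (ε / 2) (by positivity)
  refine ⟨N, fun k hk => ?_⟩
  have hcoeff : ucoeff hy (Reno.toY hy (xs k) - x) = fun n => c k n - d n := by
    rw [ucoeff_sub, hdx]; rfl
  have : dist (xs k) x = unorm hy (Reno.toY hy (xs k) - x) := by
    exact (dist_eq_norm (xs k) (x : Reno y hy)).trans rfl
  rw [this]
  have hle : unorm hy (Reno.toY hy (xs k) - x) ≤ ε / 2 := by
    apply ciSup_le
    intro F
    rw [hcoeff]
    exact hN k hk F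
  linarith

include hy in
theorem uncond_suppression [CompleteSpace Y] :
    ∃ K : ℝ, 1 ≤ K ∧ ∀ (a : ℕ → ℝ) (F G : Finset ℕ), F ⊆ G →
      ‖∑ n ∈ F, a n • y n‖ ≤ K * ‖∑ n ∈ G, a n • y n‖ := by
  classical
  let J : Reno y hy →ₗ[ℝ] Y :=
    { toFun := Reno.toY hy, map_add' := fun _ _ => rfl, map_smul' := fun _ _ => rfl }
  let Jc : Reno y hy →L[ℝ] Y := J.mkContinuous 1 (fun x => by
    rw [one_mul]; exact Reno.norm_Y_le hy x)
  have hinj : Jc.ker = ⊥ := by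
    ext x
    simp only [LinearMap.mem_ker, Submodule.mem_bot]
    constructor
    · intro h; exact h
    · intro h; exact h
  have hsurj : Jc.range = ⊤ := by
    ext z
    simp only [LinearMap.mem_range, Submodule.mem_top, iff_true]
    exact ⟨z, rfl⟩
  let E := ContinuousLinearEquiv.ofBijective Jc hinj hsurj
  have hbound : ∀ z : Y, unorm hy z ≤ ‖(E.symm : Y →L[ℝ] Reno y hy)‖ * ‖z‖ := by
    intro z
    have h1 : Reno.toY hy (E.symm z) = z := E.apply_symm_apply z
    have h2 := (E.symm : Y →L[ℝ] Reno y hy).le_opNorm z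
    calc unorm hy z = ‖E.symm z‖ := by rw [Reno.norm_def, h1]
      _ ≤ _ := h2
  set K := max 1 ‖(E.symm : Y →L[ℝ] Reno y hy)‖ with hK
  refine ⟨K, le_max_left _ _, fun a F G hFG => ?_⟩
  set x := ∑ n ∈ G, a n • y n with hxdef
  have hcx : ucoeff hy x = fun n => if n ∈ G then a n else 0 := ucoeff_finsum hy a G
  have h1 : ∑ n ∈ F, a n • y n = ∑ n ∈ F, ucoeff hy x n • y n := by
    refine Finset.sum_congr rfl fun n hn => ?_
    rw [hcx]; simp [hFG hn]
  rw [h1]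
  calc ‖∑ n ∈ F, ucoeff hy x n • y n‖ ≤ unorm hy x := le_unorm hy x F
    _ ≤ ‖(E.symm : Y →L[ℝ] Reno y hy)‖ * ‖x‖ := hbound x
    _ ≤ K * ‖x‖ := by
        apply mul_le_mul_of_nonneg_right (le_max_right _ _) (norm_nonneg _)

end RenoSpace

section Blocks
variable {Y : Type*} [NormedAddCommGroup Y] [NormedSpace ℝ Y] [CompleteSpace Y] {y : ℕ → Y}

/-- Representation of a disjointly supported vector as a finite combination. -/
lemma disj_repr {v : ℕ → Y} (hv : DisjSupported y v) :
    ∃ A : ℕ → Finset ℕ, Pairwise (Function.onFun Disjoint A) ∧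
      ∃ l : ℕ → ℕ → ℝ, (∀ j n, n ∉ A j → l j n = 0) ∧
        ∀ j, v j = ∑ n ∈ A j, l j n • y n := by
  classical
  obtain ⟨A, hAdis, hAmem⟩ := hv
  have h : ∀ j, ∃ l : ℕ →₀ ℝ, l ∈ Finsupp.supported ℝ ℝ (A j : Set ℕ) ∧
      Finsupp.linearCombination ℝ y l = v j := by
    intro j
    obtain ⟨l, hl1, hl2⟩ := (Finsupp.mem_span_image_iff_linearCombination ℝ).1 (hAmem j)
    exact ⟨l, hl1, hl2⟩
  choose l hl1 hl2 using h
  refine ⟨A, hAdis, fun j n => l j n, ?_, ?_⟩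
  · intro j n hn
    by_contra h0
    have : n ∈ (l j).support := Finsupp.mem_support_iff.2 h0
    exact hn (Finsupp.mem_supported ℝ (l j) |>.1 (hl1 j) this)
  · intro j
    rw [← hl2 j, Finsupp.linearCombination_apply]
    rw [Finsupp.sum_of_support_subset (l j) ((Finsupp.mem_supported ℝ (l j)).1 (hl1 j)) _
      (fun n _ => zero_smul ℝ (y n))]

theorem block_coord (hy : IsUncondBasis y) {v : ℕ → Y} (hv : DisjSupported y v) :
    ∃ K : ℝ, 1 ≤ K ∧ ∀ (a : ℕ → ℝ) (s : Finset ℕ), ∀ j ∈ s,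
      ‖a j • v j‖ ≤ K * ‖∑ i ∈ s, a i • v i‖ := by
  classical
  obtain ⟨A, hAdis, l, hl0, hlrep⟩ := disj_repr hv
  obtain ⟨K, hK1, hK⟩ := uncond_suppression hy
  refine ⟨K, hK1, fun a s j hj => ?_⟩
  set G := s.biUnion A with hG
  set d : ℕ → ℝ := fun n => ∑ i ∈ s, a i * l i n with hd
  have claim1 : ∑ n ∈ G, d n • y n = ∑ i ∈ s, a i • v i := by
    calc ∑ n ∈ G, d n • y n = ∑ n ∈ G, ∑ i ∈ s, (a i * l i n) • y n := by
          refine Finset.sum_congr rfl fun n _ => ?_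
          rw [hd]; rw [← Finset.sum_smul]
      _ = ∑ i ∈ s, ∑ n ∈ G, (a i * l i n) • y n := Finset.sum_comm
      _ = ∑ i ∈ s, a i • v i := by
          refine Finset.sum_congr rfl fun i hi => ?_
          have hsub : A i ⊆ G := Finset.subset_biUnion_of_mem A hi
          have : ∑ n ∈ G, (a i * l i n) • y n = ∑ n ∈ A i, (a i * l i n) • y n := by
            refine (Finset.sum_subset hsub fun n _ hn => ?_).symm
            rw [hl0 i n hn]; simp
          rw [this, hlrep i, Finset.smul_sum]
          exact Finset.sum_congr rfl fun n _ => by rw [smul_smul]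
  have claim2 : ∑ n ∈ A j, d n • y n = a j • v j := by
    have : ∀ n ∈ A j, d n = a j * l j n := by
      intro n hn
      rw [hd]
      refine Finset.sum_eq_single j (fun i hi hij => ?_) (fun h => absurd hj h)
      have : n ∉ A i := by
        have hdisj := hAdis hij
        exact fun hni => (Finset.disjoint_left.1 hdisj) hni hn
      rw [hl0 i n this, mul_zero]
    calc ∑ n ∈ A j, d n • y n = ∑ n ∈ A j, (a j * l j n) • y n :=
          Finset.sum_congr rfl fun n hn => by rw [this n hn]
      _ = a j • v j := by
          rw [hlrep j, Finset.smul_sum]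
          exact Finset.sum_congr rfl fun n _ => by rw [smul_smul]
  have hFG : A j ⊆ G := Finset.subset_biUnion_of_mem A hj
  have := hK d (A j) G hFG
  rw [claim1, claim2] at this
  exact this

end Blocks

section Helpers

lemma fin_transport {Z : Type*} [AddCommMonoid Z] (s : Finset ℕ) (F : ℕ → Z) :
    ∑ i : Fin s.card, F ((s.equivFin.symm i : ℕ)) = ∑ k ∈ s, F k := by
  rw [← Finset.sum_coe_sort s F]
  exact Fintype.sum_equiv s.equivFin.symm _ _ (fun i => rfl)

lemma sum_rpow_smul {q : ℝ} (hq0 : 0 < q) {c : ℝ} (hc : 0 ≤ c) (s : Finset ℕ) (b : ℕ → ℝ)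
    (hb : ∀ k ∈ s, 0 ≤ b k) :
    (∑ k ∈ s, (c * b k) ^ q) ^ (1 / q) = c * (∑ k ∈ s, b k ^ q) ^ (1 / q) := by
  have h1 : ∀ k ∈ s, (c * b k) ^ q = c ^ q * b k ^ q :=
    fun k hk => Real.mul_rpow hc (hb k hk)
  rw [Finset.sum_congr rfl h1, ← Finset.mul_sum,
    Real.mul_rpow (Real.rpow_nonneg hc q)
      (Finset.sum_nonneg fun k hk => Real.rpow_nonneg (hb k hk) q),
    ← Real.rpow_mul hc]
  rw [mul_one_div_cancel hq0.ne', Real.rpow_one]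

lemma pair_sum_norm {X Y : Type*} [NormedAddCommGroup X] [NormedSpace ℝ X]
    [NormedAddCommGroup Y] [NormedSpace ℝ Y] (u : ℕ → X) (v : ℕ → Y)
    (a : ℕ → ℝ) (s : Finset ℕ) (m : ℕ → ℕ) :
    ‖∑ k ∈ s, a k • ((u (m k), v (m k)) : X × Y)‖
      = max ‖∑ k ∈ s, a k • u (m k)‖ ‖∑ k ∈ s, a k • v (m k)‖ := by
  have h : ∑ k ∈ s, a k • ((u (m k), v (m k)) : X × Y)
      = ((∑ k ∈ s, a k • u (m k)), (∑ k ∈ s, a k • v (m k))) := by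
    refine Prod.ext ?_ ?_
    · rw [Prod.fst_sum]
      simp
    · rw [Prod.snd_sum]
      simp
  rw [h, Prod.norm_def]

end Helpers


theorem statement10 {X Y : Type*} [NormedAddCommGroup X] [NormedSpace ℝ X] [CompleteSpace X]
    [NormedAddCommGroup Y] [NormedSpace ℝ Y] [CompleteSpace Y]
    (q : ℝ) (hq : 1 ≤ q)
    (e : ℕ → X) (he : IsUncondBasis e) (hlow : LowerEstimate e q)
    (y : ℕ → Y) (hy : IsUncondBasis y) (hup : UpperEstimate y q)
    (u : ℕ → X) (hu : DisjSupported e u) (v : ℕ → Y) (hv : DisjSupported y v)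
    (hsn : SemiNormalized (fun n => ((u n, v n) : X × Y))) :
    ∃ nk : ℕ → ℕ, StrictMono nk ∧
      ((∃ z : ℕ → X, DisjSupported e z ∧
          SeqEquiv (fun k => ((u (nk k), v (nk k)) : X × Y)) z) ∨
       (∃ z : ℕ → Y, DisjSupported y z ∧
          SeqEquiv (fun k => ((u (nk k), v (nk k)) : X × Y)) z)) := by
  classical
  obtain ⟨CX, hCX0, hCX⟩ := hlow
  obtain ⟨CY, hCY0, hCY⟩ := hup
  obtain ⟨csn, Csn, hc0, hsnb⟩ := hsn
  have hCsn0 : 0 ≤ Csn := le_trans (norm_nonneg _) (hsnb 0).2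
  have hq0 : 0 < q := lt_of_lt_of_le one_pos hq
  obtain ⟨Au, hAud, hAum⟩ := hu
  obtain ⟨Av, hAvd, hAvm⟩ := hv
  by_cases hcase : ∃ ε, 0 < ε ∧ {n : ℕ | ε ≤ ‖u n‖}.Infinite
  · -- Case A : the X-part stays large along a subsequence
    obtain ⟨ε, hε, hinf⟩ := hcase
    have hinf' : (setOf (fun n => ε ≤ ‖u n‖)).Infinite := hinf
    set nk := Nat.nth (fun n => ε ≤ ‖u n‖) with hnk
    have hmono : StrictMono nk := Nat.nth_strictMono hinf'
    have hmem : ∀ k, ε ≤ ‖u (nk k)‖ := fun k => Nat.nth_mem_of_infinite hinf' k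
    refine ⟨nk, hmono, Or.inl ⟨fun k => u (nk k),
      ⟨Au ∘ nk, fun i j hij => hAud (hmono.injective.ne hij), fun j => hAum (nk j)⟩, ?_⟩⟩
    set K := max 1 (CY * Csn * (CX / ε)) with hK
    refine ⟨K, le_max_left _ _, fun a s => ?_⟩
    have hK1 : (1:ℝ) ≤ K := le_max_left _ _
    set Su := ‖∑ j ∈ s, a j • u (nk j)‖ with hSu
    set Sv := ‖∑ j ∈ s, a j • v (nk j)‖ with hSv
    have hpair := pair_sum_norm u v a s nk
    set g : Fin s.card → ℕ := fun i => (s.equivFin.symm i : ℕ) with hg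
    have hginj : Function.Injective g :=
      fun i j h => s.equivFin.symm.injective (Subtype.ext h)
    -- upper q-estimate in Y
    have est1 : Sv ≤ CY * Csn * (∑ j ∈ s, |a j| ^ q) ^ (1 / q) := by
      have happ := hCY s.card (fun i => a (g i) • v (nk (g i))) (fun i => Av (nk (g i)))
        (fun i j hij => hAvd ((hmono.injective.comp hginj).ne hij))
        (fun i => Submodule.smul_mem _ _ (hAvm (nk (g i))))
      rw [fin_transport s (fun j => a j • v (nk j)),
        fin_transport s (fun j => ‖a j • v (nk j)‖ ^ q)] at happ
      have hb : ∑ j ∈ s, ‖a j • v (nk j)‖ ^ q ≤ ∑ j ∈ s, (Csn * |a j|) ^ q := by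
        refine Finset.sum_le_sum fun j _ => ?_
        refine Real.rpow_le_rpow (norm_nonneg _) ?_ hq0.le
        rw [norm_smul, Real.norm_eq_abs]
        have h1 : ‖v (nk j)‖ ≤ Csn :=
          le_trans (norm_snd_le ((u (nk j), v (nk j)) : X × Y)) (hsnb (nk j)).2
        calc |a j| * ‖v (nk j)‖ ≤ |a j| * Csn :=
              mul_le_mul_of_nonneg_left h1 (abs_nonneg _)
          _ = Csn * |a j| := mul_comm _ _
      have hmono2 : (∑ j ∈ s, ‖a j • v (nk j)‖ ^ q) ^ (1/q)
          ≤ (∑ j ∈ s, (Csn * |a j|) ^ q) ^ (1/q) :=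
        Real.rpow_le_rpow (Finset.sum_nonneg fun j _ => Real.rpow_nonneg (norm_nonneg _) q)
          hb (by positivity)
      rw [sum_rpow_smul hq0 hCsn0 s (fun j => |a j|) (fun j _ => abs_nonneg _)] at hmono2
      calc Sv ≤ CY * (∑ j ∈ s, ‖a j • v (nk j)‖ ^ q) ^ (1/q) := happ
        _ ≤ CY * (Csn * (∑ j ∈ s, |a j| ^ q) ^ (1/q)) :=
            mul_le_mul_of_nonneg_left hmono2 hCY0.le
        _ = CY * Csn * (∑ j ∈ s, |a j| ^ q) ^ (1/q) := by ring
    -- lower q-estimate in X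
    have est2 : ε * (∑ j ∈ s, |a j| ^ q) ^ (1 / q) ≤ CX * Su := by
      have happ := hCX s.card (fun i => a (g i) • u (nk (g i))) (fun i => Au (nk (g i)))
        (fun i j hij => hAud ((hmono.injective.comp hginj).ne hij))
        (fun i => Submodule.smul_mem _ _ (hAum (nk (g i))))
      rw [fin_transport s (fun j => a j • u (nk j)),
        fin_transport s (fun j => ‖a j • u (nk j)‖ ^ q)] at happ
      have hb : ∑ j ∈ s, (ε * |a j|) ^ q ≤ ∑ j ∈ s, ‖a j • u (nk j)‖ ^ q := by
        refine Finset.sum_le_sum fun j _ => ?_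
        refine Real.rpow_le_rpow (by positivity) ?_ hq0.le
        rw [norm_smul, Real.norm_eq_abs]
        calc ε * |a j| = |a j| * ε := mul_comm _ _
          _ ≤ |a j| * ‖u (nk j)‖ := mul_le_mul_of_nonneg_left (hmem j) (abs_nonneg _)
      have hmono2 : (∑ j ∈ s, (ε * |a j|) ^ q) ^ (1/q)
          ≤ (∑ j ∈ s, ‖a j • u (nk j)‖ ^ q) ^ (1/q) :=
        Real.rpow_le_rpow (Finset.sum_nonneg fun j _ => by positivity) hb (by positivity)
      rw [sum_rpow_smul hq0 hε.le s (fun j => |a j|) (fun j _ => abs_nonneg _)] at hmono2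
      exact hmono2.trans happ
    constructor
    · rw [hpair]
      have h1 : K⁻¹ ≤ 1 := inv_le_one_of_one_le₀ hK1
      have h2 : K⁻¹ * Su ≤ Su := by
        calc K⁻¹ * Su ≤ 1 * Su := mul_le_mul_of_nonneg_right h1 (norm_nonneg _)
          _ = Su := one_mul _
      exact h2.trans (le_max_left _ _)
    · rw [hpair]
      apply max_le
      · exact le_mul_of_one_le_left (norm_nonneg _) hK1
      · have hS : (∑ j ∈ s, |a j| ^ q) ^ (1/q) ≤ CX / ε * Su := by
          rw [div_mul_eq_mul_div, le_div_iff₀ hε, mul_comm]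
          exact est2
        calc Sv ≤ CY * Csn * (∑ j ∈ s, |a j| ^ q) ^ (1/q) := est1
          _ ≤ CY * Csn * (CX / ε * Su) :=
              mul_le_mul_of_nonneg_left hS (by positivity)
          _ = (CY * Csn * (CX / ε)) * Su := by ring
          _ ≤ K * Su := mul_le_mul_of_nonneg_right (le_max_right _ _) (norm_nonneg _)
  · -- Case B : the X-part tends to zero
    push_neg at hcase
    have hfin : ∀ ε : ℝ, 0 < ε → {n : ℕ | ε ≤ ‖u n‖}.Finite :=
      fun ε hε => hcase ε hε
    -- choose a rapidly vanishing subsequence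
    have hex : ∀ k m : ℕ, ∃ n : ℕ, m < n ∧ ‖u n‖ < csn / 2 * (1/2 : ℝ) ^ k := by
      intro k m
      have hδ : 0 < csn / 2 * (1/2 : ℝ) ^ k := by positivity
      obtain ⟨B, hB⟩ := (hfin _ hδ).bddAbove
      refine ⟨max B m + 1, by omega, ?_⟩
      by_contra h
      push_neg at h
      have : max B m + 1 ≤ B := hB h
      omega
    choose f hf1 hf2 using hex
    set nk : ℕ → ℕ := fun k => Nat.rec (f 0 0) (fun k ih => f (k+1) ih) k with hnk
    have hnk0 : nk 0 = f 0 0 := rfl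
    have hnksucc : ∀ k, nk (k+1) = f (k+1) (nk k) := fun k => rfl
    have hmono : StrictMono nk := by
      apply strictMono_nat_of_lt_succ
      intro k
      rw [hnksucc]
      exact hf1 (k+1) (nk k)
    have hbound : ∀ k, ‖u (nk k)‖ < csn / 2 * (1/2 : ℝ) ^ k := by
      intro k
      cases k with
      | zero => exact hf2 0 0
      | succ k => rw [hnksucc]; exact hf2 (k+1) (nk k)
    have hvlb : ∀ k, csn ≤ ‖v (nk k)‖ := by
      intro k
      have h1 : csn ≤ max ‖u (nk k)‖ ‖v (nk k)‖ := by
        have := (hsnb (nk k)).1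
        rwa [Prod.norm_def] at this
      have h2 : ‖u (nk k)‖ < csn := by
        have hle : csn / 2 * (1/2 : ℝ) ^ k ≤ csn / 2 * 1 := by
          apply mul_le_mul_of_nonneg_left _ (by positivity)
          exact pow_le_one₀ (by norm_num) (by norm_num)
        have := (hbound k).trans_le hle
        linarith
      rcases max_cases ‖u (nk k)‖ ‖v (nk k)‖ with ⟨hmax, _⟩ | ⟨hmax, _⟩
      · rw [hmax] at h1; linarith
      · rw [hmax] at h1; exact h1
    have hzdisj : DisjSupported y (fun k => v (nk k)) :=
      ⟨Av ∘ nk, fun i j hij => hAvd (hmono.injective.ne hij), fun j => hAvm (nk j)⟩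
    obtain ⟨Kb, hKb1, hKb⟩ := block_coord hy hzdisj
    refine ⟨nk, hmono, Or.inr ⟨fun k => v (nk k), hzdisj, ⟨Kb, hKb1, fun a s => ?_⟩⟩⟩
    set Su := ‖∑ j ∈ s, a j • u (nk j)‖ with hSu
    set Sv := ‖∑ j ∈ s, a j • v (nk j)‖ with hSv
    have hpair := pair_sum_norm u v a s nk
    have key : Su ≤ Kb * Sv := by
      rcases Finset.eq_empty_or_nonempty s with rfl | hs
      · simp [hSu, hSv]
      · obtain ⟨j₀, hj₀s, hj₀⟩ := Finset.exists_max_image s (fun i => |a i|) hs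
        -- Su is small
        have h1 : Su ≤ ∑ j ∈ s, |a j| * (csn / 2 * (1/2 : ℝ) ^ j) := by
          refine (norm_sum_le _ _).trans (Finset.sum_le_sum fun j _ => ?_)
          rw [norm_smul, Real.norm_eq_abs]
          exact mul_le_mul_of_nonneg_left (hbound j).le (abs_nonneg _)
        have h2 : ∑ j ∈ s, |a j| * (csn / 2 * (1/2 : ℝ) ^ j)
            ≤ |a j₀| * (csn / 2) * ∑ j ∈ s, (1/2 : ℝ) ^ j := by
          rw [Finset.mul_sum]
          refine Finset.sum_le_sum fun j hj => ?_
          have := hj₀ j hj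
          calc |a j| * (csn / 2 * (1/2 : ℝ) ^ j)
              ≤ |a j₀| * (csn / 2 * (1/2 : ℝ) ^ j) := by
                apply mul_le_mul_of_nonneg_right this (by positivity)
            _ = |a j₀| * (csn / 2) * (1/2 : ℝ) ^ j := by ring
        have h3 : ∑ j ∈ s, (1/2 : ℝ) ^ j ≤ 2 := by
          have hsub : s ⊆ Finset.range (s.sup id + 1) := by
            intro j hj
            simp only [Finset.mem_range]
            exact Nat.lt_succ_of_le (Finset.le_sup (f := id) hj)
          calc ∑ j ∈ s, (1/2 : ℝ) ^ j ≤ ∑ j ∈ Finset.range (s.sup id + 1), (1/2 : ℝ) ^ j :=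
                Finset.sum_le_sum_of_subset_of_nonneg hsub (fun j _ _ => by positivity)
            _ ≤ 2 := sum_geometric_two_le _
        -- Sv is large
        have h4 : |a j₀| * csn ≤ Kb * Sv := by
          have := hKb a s j₀ hj₀s
          rw [norm_smul, Real.norm_eq_abs] at this
          exact le_trans (mul_le_mul_of_nonneg_left (hvlb j₀) (abs_nonneg _)) this
        calc Su ≤ ∑ j ∈ s, |a j| * (csn / 2 * (1/2 : ℝ) ^ j) := h1
          _ ≤ |a j₀| * (csn / 2) * ∑ j ∈ s, (1/2 : ℝ) ^ j := h2
          _ ≤ |a j₀| * (csn / 2) * 2 := by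
              apply mul_le_mul_of_nonneg_left h3 (by positivity)
          _ = |a j₀| * csn := by ring
          _ ≤ Kb * Sv := h4
    constructor
    · rw [hpair]
      have h1 : Kb⁻¹ * Sv ≤ Sv := by
        calc Kb⁻¹ * Sv ≤ 1 * Sv :=
              mul_le_mul_of_nonneg_right (inv_le_one_of_one_le₀ hKb1) (norm_nonneg _)
          _ = Sv := one_mul _
      exact h1.trans (le_max_right _ _)
    · rw [hpair]
      exact max_le key (le_mul_of_one_le_left (norm_nonneg _) hKb1)
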